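/- Define, as functions of g: L = N[(1−τ)(mL_g+αF)+(mg+F)mN]/(α+(Nm−α)τ), q = (1−τ)(L+L_g−αg)/((Nm+α(1−τ))(L+L_g)), p = mw(L+L_g)/(L+L_g−α((L+L_g)q+g)), and Π = ((L+L_g)q+g)(p−mw) − Fw. Assume Nm > α, τ ∈ (0,1), F > 0, w > 0, L_g ≥ 0, g ≥ 0. Then ∂Π/∂g > 0: government purchase increases firm profit. (Key facts: ∂/∂g((L+L_g)q) = (1−τ)(Nm−α)/(α+(Nm−α)τ) > 0, p − mw > 0, and ∂p/∂g > 0.) -/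

import Mathlib

set_option maxHeartbeats 1000000

/-- Government purchase increases firm profit. -/
theorem stmt_16 (α N m F w Lg τ : ℝ) (hα : 0 < α) (hN : 0 < N) (hm : 0 < m)
    (hF : 0 < F) (hw : 0 < w) (hLg : 0 ≤ Lg) (hτ0 : 0 < τ) (hτ1 : τ < 1)
    (hNm : N * m > α) (g : ℝ) (hg : 0 ≤ g) :
    0 < deriv (fun g : ℝ =>
        let L := N * ((1 - τ) * (m * Lg + α * F) + (m * g + F) * m * N) / (α + (N * m - α) * τ)
        let q := (1 - τ) * (L + Lg - α * g) / ((N * m + α * (1 - τ)) * (L + Lg))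
        let p := m * w * (L + Lg) / (L + Lg - α * ((L + Lg) * q + g))
        ((L + Lg) * q + g) * (p - m * w) - F * w) g := by
  have h1τ : 0 < 1 - τ := by linarith
  set D := α + (N * m - α) * τ with hDdef
  have hD : 0 < D := by nlinarith
  set K := N * m + α * (1 - τ) with hKdef
  have hK : 0 < K := by nlinarith
  set A0 := Lg + N * ((1 - τ) * (m * Lg + α * F) + F * (m * N)) / D with hA0def
  have hA0 : 0 < A0 := by
    have hX : 0 < (1 - τ) * (m * Lg + α * F) + F * (m * N) := by
      have h1 : 0 ≤ (1 - τ) * (m * Lg + α * F) := mul_nonneg h1τ.le (by nlinarith)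
      nlinarith [mul_pos hF (mul_pos hm hN)]
    have := div_pos (mul_pos hN hX) hD
    rw [hA0def]; linarith
  set B0 := N * m * (m * N) / D - α with hB0def
  have hB0 : 0 < B0 := by
    have h : B0 = (N * m - α) * K / D := by
      rw [hB0def, hKdef, hDdef]; have hD' : α + (N * m - α) * τ ≠ 0 := hD.ne'; field_simp; ring
    rw [h]; exact div_pos (mul_pos (by linarith) hK) hD
  have hug : 0 < A0 + B0 * g := by nlinarith [mul_nonneg hB0.le hg]
  have hSg : 0 < A0 + (B0 + α) * g := by nlinarith [mul_nonneg (by linarith : (0:ℝ) ≤ B0 + α) hg]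
  set f2 : ℝ → ℝ := fun x => w * α * ((1 - τ) * (A0 + B0 * x) + K * x)^2 / (N * K * (A0 + B0 * x)) - F * w with hf2def
  have hcu : ∀ᶠ x in nhds g, 0 < A0 + B0 * x :=
    ((continuous_const.add (continuous_const.mul continuous_id)).continuousAt).eventually
      (eventually_gt_nhds hug)
  have hcS : ∀ᶠ x in nhds g, 0 < A0 + (B0 + α) * x :=
    ((continuous_const.add (continuous_const.mul continuous_id)).continuousAt).eventually
      (eventually_gt_nhds hSg)
  have hev : (fun x : ℝ =>
        let L := N * ((1 - τ) * (m * Lg + α * F) + (m * x + F) * m * N) / D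
        let q := (1 - τ) * (L + Lg - α * x) / (K * (L + Lg))
        let p := m * w * (L + Lg) / (L + Lg - α * ((L + Lg) * q + x))
        ((L + Lg) * q + x) * (p - m * w) - F * w) =ᶠ[nhds g] f2 := by
    filter_upwards [hcu, hcS] with x hux hSx
    simp only [hf2def]
    have hLx : N * ((1 - τ) * (m * Lg + α * F) + (m * x + F) * m * N) / D + Lg
        = A0 + (B0 + α) * x := by
      rw [hA0def, hB0def]; field_simp; ring
    rw [hLx]
    set u := A0 + B0 * x with hudef
    have hsu : A0 + (B0 + α) * x = u + α * x := by rw [hudef]; ring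
    rw [hsu]
    have hs0 : u + α * x ≠ 0 := by rw [← hsu]; exact hSx.ne'
    have hq : (u + α * x) * ((1 - τ) * (u + α * x - α * x) / (K * (u + α * x))) + x
        = ((1 - τ) * u + K * x) / K := by
      field_simp
      ring
    rw [hq]
    have hden : u + α * x - α * (((1 - τ) * u + K * x) / K) = N * m * u / K := by
      rw [hKdef]; field_simp; ring
    rw [hden]
    field_simp
    ring
  clear_value f2 B0 A0 K D
  rw [hev.deriv_eq]
  have h1 : HasDerivAt (fun x : ℝ => A0 + B0 * x) B0 g := by
    simpa using ((hasDerivAt_id g).const_mul B0).const_add A0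
  have hP : HasDerivAt (fun x : ℝ => (1 - τ) * (A0 + B0 * x) + K * x) ((1 - τ) * B0 + K) g := by
    have h2 := (h1.const_mul (1 - τ)).add ((hasDerivAt_id g).const_mul K)
    exact h2.congr_deriv (by ring)
  have hnum : HasDerivAt (fun x : ℝ => w * α * ((1 - τ) * (A0 + B0 * x) + K * x) ^ 2)
      (w * α * (2 * ((1 - τ) * (A0 + B0 * g) + K * g) * ((1 - τ) * B0 + K))) g := by
    have h3 := (hP.pow 2).const_mul (w * α)
    exact h3.congr_deriv (by norm_num)
  have hdenD : HasDerivAt (fun x : ℝ => N * K * (A0 + B0 * x)) (N * K * B0) g :=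
    h1.const_mul (N * K)
  have hden0 : N * K * (A0 + B0 * g) ≠ 0 := by positivity
  have hf2' := (hnum.div hdenD hden0).sub_const (F * w)
  clear hev hcu hcS
  replace hf2' : HasDerivAt (fun x : ℝ => w * α * ((1 - τ) * (A0 + B0 * x) + K * x) ^ 2 / (N * K * (A0 + B0 * x)) - F * w) _ g := hf2'
  rw [hf2def, hf2'.deriv]
  clear hf2def
  apply div_pos
  · have hPg : 0 < (1 - τ) * (A0 + B0 * g) + K * g := by nlinarith [mul_nonneg hK.le hg]
    have hkey : 0 < 2 * ((1 - τ) * B0 + K) * (A0 + B0 * g)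
        - ((1 - τ) * (A0 + B0 * g) + K * g) * B0 := by
      nlinarith [mul_pos hK hA0, mul_nonneg (mul_nonneg h1τ.le hB0.le) hA0.le,
        mul_nonneg (mul_nonneg (mul_nonneg h1τ.le hB0.le) hB0.le) hg,
        mul_nonneg (mul_nonneg hK.le hB0.le) hg]
    nlinarith [mul_pos (mul_pos (mul_pos (mul_pos hw hα) (mul_pos hN hK)) hPg) hkey]
  · positivity
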